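/- Let Γ be a diagram satisfying condition (1) of subprincipality: for every A ⊆ T with #A > 1, #E'_A ≥ 3. Then for any two subsets A, A' ⊆ T with #A > 1, #A' > 1, #E'_A = 3 and #E'_{A'} = 3, the sets A and A' are either disjoint, or one is contained in the other. -/
import Mathlib

private lemma pair_split' {V : Type*} [DecidableEq V] (E : Finset (Finset V))
    (X Y Z W : Finset V)
    (hsum : ∀ e ∈ E, (e ∩ X).card + (e ∩ Y).card + (e ∩ Z).card + (e ∩ W).card = 2) :
    (E.filter (fun e => (e ∩ X).card + (e ∩ Y).card = 1)).card
      = (E.filter (fun e => (e ∩ X).card = 1 ∧ (e ∩ Z).card = 1)).card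
      + (E.filter (fun e => (e ∩ X).card = 1 ∧ (e ∩ W).card = 1)).card
      + (E.filter (fun e => (e ∩ Y).card = 1 ∧ (e ∩ Z).card = 1)).card
      + (E.filter (fun e => (e ∩ Y).card = 1 ∧ (e ∩ W).card = 1)).card := by
  classical
  simp only [Finset.card_filter]
  rw [← Finset.sum_add_distrib, ← Finset.sum_add_distrib, ← Finset.sum_add_distrib]
  refine Finset.sum_congr rfl fun e he => ?_
  have := hsum e he
  split_ifs <;> omega

private lemma single_split' {V : Type*} [DecidableEq V] (E : Finset (Finset V))
    (X Y Z W : Finset V)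
    (hsum : ∀ e ∈ E, (e ∩ X).card + (e ∩ Y).card + (e ∩ Z).card + (e ∩ W).card = 2) :
    (E.filter (fun e => (e ∩ X).card = 1)).card
      = (E.filter (fun e => (e ∩ X).card = 1 ∧ (e ∩ Y).card = 1)).card
      + (E.filter (fun e => (e ∩ X).card = 1 ∧ (e ∩ Z).card = 1)).card
      + (E.filter (fun e => (e ∩ X).card = 1 ∧ (e ∩ W).card = 1)).card := by
  classical
  simp only [Finset.card_filter]
  rw [← Finset.sum_add_distrib, ← Finset.sum_add_distrib]
  refine Finset.sum_congr rfl fun e he => ?_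
  have := hsum e he
  split_ifs <;> omega



/-- In a diagram satisfying condition (1) of subprincipality
(`#E'_A ≥ 3` for all `A ⊆ T` with `#A > 1`), any two subsets `A, A' ⊆ T`
of size `> 1` with `#E'_A = #E'_{A'} = 3` are disjoint or nested. -/
theorem subprincipal_three_boundary_nested_or_disjoint
    {V : Type*} [Fintype V] [DecidableEq V]
    (U T : Finset V) (E : Finset (Finset V))
    (hUT : Disjoint U T) (hcover : U ∪ T = Finset.univ)
    (hE2 : ∀ e ∈ E, e.card = 2)
    (hU : ∀ v ∈ U, (E.filter (fun e => v ∈ e)).card = 1)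
    (hT : ∀ v ∈ T, (E.filter (fun e => v ∈ e)).card = 3)
    (hcond1 : ∀ A ⊆ T, 1 < A.card →
      3 ≤ (E.filter (fun e => (e ∩ A).card = 1)).card)
    (A A' : Finset V) (hA : A ⊆ T) (hA' : A' ⊆ T)
    (hA1 : 1 < A.card) (hA'1 : 1 < A'.card)
    (h3 : (E.filter (fun e => (e ∩ A).card = 1)).card = 3)
    (h3' : (E.filter (fun e => (e ∩ A').card = 1)).card = 3) :
    Disjoint A A' ∨ A ⊆ A' ∨ A' ⊆ A := by
  by_contra hcon
  push_neg at hcon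
  obtain ⟨hnd, hns, hns'⟩ := hcon
  set X := A \ A' with hXdef
  set Y := A ∩ A' with hYdef
  set Z := A' \ A with hZdef
  set W := (A ∪ A')ᶜ with hWdef
  -- basic set facts
  have hXY : X ∪ Y = A := Finset.sdiff_union_inter A A'
  have hYZ : Y ∪ Z = A' := by
    ext x; simp [hYdef, hZdef]; tauto
  have hXYZ : X ∪ Y ∪ Z = A ∪ A' := by
    ext x; simp [hXdef, hYdef, hZdef]; tauto
  have hdXY : Disjoint X Y := by
    simp only [Finset.disjoint_left, hXdef, hYdef, Finset.mem_sdiff, Finset.mem_inter]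
    tauto
  have hdXYZ : Disjoint (X ∪ Y) Z := by
    simp only [Finset.disjoint_left, hXdef, hYdef, hZdef, Finset.mem_union,
      Finset.mem_sdiff, Finset.mem_inter]
    rintro a (h | h) <;> simp [h.1, h.2] <;> tauto
  have hdW : Disjoint (X ∪ Y ∪ Z) W := by
    rw [hXYZ, hWdef]; exact disjoint_compl_right
  have hsplit : ∀ (S S' : Finset V), Disjoint S S' → ∀ e : Finset V,
      (e ∩ (S ∪ S')).card = (e ∩ S).card + (e ∩ S').card := by
    intro S S' hd e
    rw [Finset.inter_union_distrib_left,
      Finset.card_union_of_disjoint (hd.mono Finset.inter_subset_right Finset.inter_subset_right)]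
  have key : ∀ e ∈ E, (e ∩ X).card + (e ∩ Y).card + (e ∩ Z).card + (e ∩ W).card = 2 := by
    intro e he
    have h1 : e ∩ (X ∪ Y ∪ Z ∪ W) = e := by
      rw [hXYZ, hWdef, Finset.union_compl, Finset.inter_univ]
    have := hsplit (X ∪ Y ∪ Z) W hdW e
    have h2 := hsplit (X ∪ Y) Z hdXYZ e
    have h3 := hsplit X Y hdXY e
    rw [h1, hE2 e he] at this
    omega
  -- singleton boundary
  have hsing : ∀ v ∈ T, (E.filter (fun e => (e ∩ ({v} : Finset V)).card = 1)).card = 3 := by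
    intro v hv
    have : E.filter (fun e => (e ∩ ({v} : Finset V)).card = 1) = E.filter (fun e => v ∈ e) := by
      apply Finset.filter_congr
      intro e _
      by_cases hve : v ∈ e
      · simp [Finset.inter_singleton_of_mem hve, hve]
      · simp [Finset.inter_singleton_of_notMem hve, hve]
    rw [this]; exact hT v hv
  -- lower bound for a nonempty subset of T
  have hbound : ∀ B ⊆ T, B.Nonempty → 3 ≤ (E.filter (fun e => (e ∩ B).card = 1)).card := by
    intro B hBT hBne
    rcases Nat.lt_or_ge 1 B.card with h | h
    · exact hcond1 B hBT h
    · have : B.card = 1 := le_antisymm h hBne.card_pos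
      obtain ⟨v, hv⟩ := Finset.card_eq_one.mp this
      subst hv
      rw [hsing v (hBT (Finset.mem_singleton_self v))]
  -- nonemptiness
  have hXne : X.Nonempty := by
    obtain ⟨a, ha, ha'⟩ := Finset.not_subset.mp hns
    exact ⟨a, Finset.mem_sdiff.mpr ⟨ha, ha'⟩⟩
  have hYne : Y.Nonempty := by
    obtain ⟨a, ha, ha'⟩ := Finset.not_disjoint_iff.mp hnd
    exact ⟨a, Finset.mem_inter.mpr ⟨ha, ha'⟩⟩
  have hZne : Z.Nonempty := by
    obtain ⟨a, ha, ha'⟩ := Finset.not_subset.mp hns'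
    exact ⟨a, Finset.mem_sdiff.mpr ⟨ha, ha'⟩⟩
  have hXT : X ⊆ T := (Finset.sdiff_subset).trans hA
  have hYT : Y ⊆ T := (Finset.inter_subset_left).trans hA
  have hZT : Z ⊆ T := (Finset.sdiff_subset).trans hA'
  -- rewrite boundary of A and A' in terms of pieces
  have keyY : ∀ e ∈ E, (e ∩ Y).card + (e ∩ Z).card + (e ∩ X).card + (e ∩ W).card = 2 := by
    intro e he; have := key e he; omega
  have keyZ : ∀ e ∈ E, (e ∩ Z).card + (e ∩ X).card + (e ∩ Y).card + (e ∩ W).card = 2 := by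
    intro e he; have := key e he; omega
  have keyW : ∀ e ∈ E, (e ∩ W).card + (e ∩ X).card + (e ∩ Y).card + (e ∩ Z).card = 2 := by
    intro e he; have := key e he; omega
  have hbA : (E.filter (fun e => (e ∩ A).card = 1)).card
      = (E.filter (fun e => (e ∩ X).card + (e ∩ Y).card = 1)).card := by
    congr 1
    apply Finset.filter_congr
    intro e _
    rw [← hXY, hsplit X Y hdXY e]
  have hbA' : (E.filter (fun e => (e ∩ A').card = 1)).card
      = (E.filter (fun e => (e ∩ Y).card + (e ∩ Z).card = 1)).card := by
    congr 1
    apply Finset.filter_congr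
    intro e _
    rw [← hYZ, hsplit Y Z (hdXYZ.mono_left Finset.subset_union_right) e]
  have hbW : (E.filter (fun e => (e ∩ (A ∪ A')).card = 1)).card
      = (E.filter (fun e => (e ∩ W).card = 1)).card := by
    congr 1
    apply Finset.filter_congr
    intro e he
    have h1 : e ∩ ((A ∪ A') ∪ W) = e := by
      rw [hWdef, Finset.union_compl, Finset.inter_univ]
    have h2 := hsplit (A ∪ A') W (by rw [hWdef]; exact disjoint_compl_right) e
    rw [h1, hE2 e he] at h2
    constructor <;> intro h <;> omega
  have hsym : ∀ S S' : Finset V,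
      (E.filter (fun e => (e ∩ S).card = 1 ∧ (e ∩ S').card = 1)).card
        = (E.filter (fun e => (e ∩ S').card = 1 ∧ (e ∩ S).card = 1)).card := by
    intro S S'
    congr 1
    apply Finset.filter_congr
    intro e _
    exact and_comm
  have e1 := pair_split' E X Y Z W key
  have e2 := pair_split' E Y Z X W keyY
  have e3 := single_split' E Y Z X W keyY
  have e4 := single_split' E X Y Z W key
  have e5 := single_split' E Z X Y W keyZ
  have e6 := single_split' E W X Y Z keyW
  have s1 := hsym Y X
  have s2 := hsym Z X
  have s3 := hsym Z Y
  have s4 := hsym W X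
  have s5 := hsym W Y
  have s6 := hsym W Z
  have b1 : (E.filter (fun e => (e ∩ X).card + (e ∩ Y).card = 1)).card = 3 := by
    rw [← hbA]; exact h3
  have b2 : (E.filter (fun e => (e ∩ Y).card + (e ∩ Z).card = 1)).card = 3 := by
    rw [← hbA']; exact h3'
  have b3 : 3 ≤ (E.filter (fun e => (e ∩ Y).card = 1)).card := hbound Y hYT hYne
  have b4 : 3 ≤ (E.filter (fun e => (e ∩ X).card = 1)).card := hbound X hXT hXne
  have b5 : 3 ≤ (E.filter (fun e => (e ∩ Z).card = 1)).card := hbound Z hZT hZne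
  have b6 : 3 ≤ (E.filter (fun e => (e ∩ W).card = 1)).card := by
    rw [← hbW]
    exact hcond1 (A ∪ A') (Finset.union_subset hA hA')
      (lt_of_lt_of_le hA1 (Finset.card_le_card Finset.subset_union_left))
  omega
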